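/- Let α ∈ (0,1), β > 0, b₁, b₂ ∈ ℝ with b₁² + b₂² > 0. Then the system q₂/(1-q₂)² = β²α q₁ + b₁², q₁/(1-q₁)² = β²(1-α) q₂ + b₂² has a unique solution (q̄₁, q̄₂) ∈ [0,1) × [0,1). -/

import Mathlib

noncomputable def gq (y : ℝ) : ℝ := 2*y/(2*y+1+Real.sqrt (4*y+1))

lemma gq_denom_pos {y : ℝ} (hy : 0 ≤ y) : 0 < 2*y+1+Real.sqrt (4*y+1) := by
  have := Real.sqrt_nonneg (4*y+1); linarith

lemma gq_nonneg {y : ℝ} (hy : 0 ≤ y) : 0 ≤ gq y :=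
  div_nonneg (by linarith) (gq_denom_pos hy).le

lemma gq_lt_one {y : ℝ} (hy : 0 ≤ y) : gq y < 1 := by
  rw [gq, div_lt_one (gq_denom_pos hy)]
  have := Real.sqrt_nonneg (4*y+1); linarith

lemma f_gq {y : ℝ} (hy : 0 ≤ y) : gq y / (1 - gq y)^2 = y := by
  have hs : Real.sqrt (4*y+1) ^ 2 = 4*y+1 := Real.sq_sqrt (by linarith)
  have hs0 : 0 ≤ Real.sqrt (4*y+1) := Real.sqrt_nonneg _
  have hd : (0:ℝ) < 2*y+1+Real.sqrt (4*y+1) := gq_denom_pos hy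
  have h1 : gq y < 1 := gq_lt_one hy
  have h2 : (1 - gq y) ≠ 0 := by linarith [h1]
  have h2' : (1 - gq y)^2 ≠ 0 := pow_ne_zero 2 h2
  have key : gq y = y * (1 - gq y)^2 := by
    rw [gq]
    field_simp
    have hs' : Real.sqrt (y*4+1) ^ 2 = y*4+1 := Real.sq_sqrt (by linarith)
    linear_combination (-y) * hs'
  nth_rewrite 1 [key]
  rw [mul_div_assoc, div_self h2', mul_one]

lemma f_strictMono {x y : ℝ} (hx : 0 ≤ x) (hxy : x < y) (hy : y < 1) :
    x/(1-x)^2 < y/(1-y)^2 := by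
  have h1 : (0:ℝ) < (1-x)^2 := by nlinarith
  have h2 : (0:ℝ) < (1-y)^2 := by nlinarith
  rw [div_lt_div_iff₀ h1 h2]
  have h3 : x*y < 1 := by nlinarith
  nlinarith [mul_pos (sub_pos.2 hxy) (sub_pos.2 h3)]

lemma gq_mono {y y' : ℝ} (hy : 0 ≤ y) (hyy : y ≤ y') : gq y ≤ gq y' := by
  by_contra h
  push_neg at h
  have := f_strictMono (gq_nonneg (le_trans hy hyy)) h (gq_lt_one hy)
  rw [f_gq hy, f_gq (le_trans hy hyy)] at this
  linarith

lemma gq_contOn : ContinuousOn gq (Set.Ici 0) := by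
  apply ContinuousOn.div
  · fun_prop
  · apply Continuous.continuousOn
    have : Continuous fun y : ℝ => Real.sqrt (4*y+1) :=
      Real.continuous_sqrt.comp (by fun_prop)
    fun_prop
  · intro y hy
    exact ne_of_gt (gq_denom_pos hy)

lemma sol_pos (a c b1 b2 : ℝ) (ha : 0 < a) (hc : 0 < c) (hb : 0 < b1^2 + b2^2)
    (x₁ x₂ : ℝ) (hx10 : 0 ≤ x₁) (hx11 : x₁ < 1) (hx20 : 0 ≤ x₂) (hx21 : x₂ < 1)
    (e1 : x₂/(1-x₂)^2 = a*x₁ + b1^2) (e2 : x₁/(1-x₁)^2 = c*x₂ + b2^2) :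
    0 < x₁ ∧ 0 < x₂ := by
  rcases eq_or_lt_of_le hx10 with h|h
  · exfalso
    have h1 : c*x₂ + b2^2 = 0 := by rw [← e2, ← h]; norm_num
    have hx2 : x₂ = 0 := by nlinarith [sq_nonneg b2, mul_nonneg hc.le hx20]
    have hb2 : b2^2 = 0 := by nlinarith [mul_nonneg hc.le hx20]
    have h2 : a*x₁ + b1^2 = 0 := by rw [← e1, hx2]; norm_num
    rw [← h] at h2
    have hb1 : b1^2 = 0 := by linarith [h2]
    linarith
  · refine ⟨h, ?_⟩
    rcases eq_or_lt_of_le hx20 with h2|h2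
    · exfalso
      have h3 : (0:ℝ) = a*x₁ + b1^2 := by rw [← e1, ← h2]; norm_num
      nlinarith [mul_pos ha h, sq_nonneg b1]
    · exact h2

lemma no_lt (a c b1 b2 : ℝ) (ha : 0 < a) (hc : 0 < c)
    (x₁ x₂ y₁ y₂ : ℝ) (hx₁ : 0 < x₁) (hx₂ : 0 < x₂) (hx₁1 : x₁ < 1) (hx₂1 : x₂ < 1)
    (hy₁0 : 0 ≤ y₁) (hy₁1 : y₁ < 1) (hy₂0 : 0 ≤ y₂) (hy₂1 : y₂ < 1)
    (e1 : x₂/(1-x₂)^2 = a*x₁ + b1^2) (e2 : x₁/(1-x₁)^2 = c*x₂ + b2^2)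
    (e1' : y₂/(1-y₂)^2 = a*y₁ + b1^2) (e2' : y₁/(1-y₁)^2 = c*y₂ + b2^2)
    (hlt : x₁ < y₁) : False := by
  have hf : x₂/(1-x₂)^2 < y₂/(1-y₂)^2 := by
    rw [e1, e1']
    have := mul_lt_mul_of_pos_left hlt ha
    linarith
  have hx2y2 : x₂ < y₂ := by
    by_contra hcon
    push_neg at hcon
    rcases eq_or_lt_of_le hcon with hcc|hcc
    · rw [hcc] at hf; linarith
    · have := f_strictMono hy₂0 hcc hx₂1
      linarith
  have k1 : y₁ * (x₁/(1-x₁)^2) < x₁ * (y₁/(1-y₁)^2) := by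
    have d2 : (0:ℝ) < (1-y₁)^2 := by nlinarith
    have hxy : 0 < x₁*y₁ := mul_pos hx₁ (lt_trans hx₁ hlt)
    have hd : (1-y₁)^2 < (1-x₁)^2 := by nlinarith
    calc y₁ * (x₁/(1-x₁)^2) = x₁*y₁/(1-x₁)^2 := by ring
    _ < x₁*y₁/(1-y₁)^2 := div_lt_div_of_pos_left hxy d2 hd
    _ = x₁ * (y₁/(1-y₁)^2) := by ring
  have k2 : y₂ * (x₂/(1-x₂)^2) < x₂ * (y₂/(1-y₂)^2) := by
    have d2 : (0:ℝ) < (1-y₂)^2 := by nlinarith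
    have hxy : 0 < x₂*y₂ := mul_pos hx₂ (lt_trans hx₂ hx2y2)
    have hd : (1-y₂)^2 < (1-x₂)^2 := by nlinarith
    calc y₂ * (x₂/(1-x₂)^2) = x₂*y₂/(1-x₂)^2 := by ring
    _ < x₂*y₂/(1-y₂)^2 := div_lt_div_of_pos_left hxy d2 hd
    _ = x₂ * (y₂/(1-y₂)^2) := by ring
  rw [e2, e2'] at k1
  rw [e1, e1'] at k2
  have h1 : 0 < c * (x₁*y₂ - x₂*y₁) := by
    linarith [k1, mul_nonneg (sq_nonneg b2) (sub_nonneg.2 hlt.le)]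
  have h2 : 0 < a * (x₂*y₁ - x₁*y₂) := by
    linarith [k2, mul_nonneg (sq_nonneg b1) (sub_nonneg.2 hx2y2.le)]
  have p1 : 0 < x₁*y₂ - x₂*y₁ := by
    by_contra hp
    push_neg at hp
    linarith [h1, mul_nonneg hc.le (neg_nonneg.2 hp)]
  linarith [h2, mul_nonneg ha.le p1.le]

theorem stmt6 (α β b₁ b₂ : ℝ) (hα : α ∈ Set.Ioo (0 : ℝ) 1) (hβ : 0 < β)
    (hb : 0 < b₁ ^ 2 + b₂ ^ 2) :
    ∃! p : ℝ × ℝ, p.1 ∈ Set.Ico (0 : ℝ) 1 ∧ p.2 ∈ Set.Ico (0 : ℝ) 1 ∧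
      p.2 / (1 - p.2) ^ 2 = β ^ 2 * α * p.1 + b₁ ^ 2 ∧
      p.1 / (1 - p.1) ^ 2 = β ^ 2 * (1 - α) * p.2 + b₂ ^ 2 := by
  obtain ⟨hα0, hα1⟩ := hα
  set a := β^2*α with ha_def
  set c := β^2*(1-α) with hc_def
  have ha : 0 < a := mul_pos (pow_pos hβ 2) hα0
  have hc : 0 < c := mul_pos (pow_pos hβ 2) (by linarith)
  have hb1 : (0:ℝ) ≤ b₁^2 := sq_nonneg _
  have hb2 : (0:ℝ) ≤ b₂^2 := sq_nonneg _
  set M := gq (c * gq (a + b₁^2) + b₂^2) with hM_def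
  have harg1 : (0:ℝ) ≤ a + b₁^2 := by linarith
  have harg2 : (0:ℝ) ≤ c * gq (a + b₁^2) + b₂^2 := by
    have := gq_nonneg harg1; nlinarith
  have hM0 : 0 ≤ M := gq_nonneg harg2
  have hM1 : M < 1 := gq_lt_one harg2
  set F : ℝ → ℝ := fun t => gq (c * gq (a*t + b₁^2) + b₂^2) - t with hF_def
  -- arguments nonneg for t ∈ [0, M]
  have hargt : ∀ t : ℝ, 0 ≤ t → (0:ℝ) ≤ a*t + b₁^2 := fun t ht => by
    nlinarith [mul_nonneg ha.le ht]
  have hargt2 : ∀ t : ℝ, 0 ≤ t → (0:ℝ) ≤ c * gq (a*t + b₁^2) + b₂^2 := fun t ht => by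
    nlinarith [mul_nonneg hc.le (gq_nonneg (hargt t ht))]
  have hcont : ContinuousOn F (Set.Icc 0 M) := by
    apply ContinuousOn.sub _ continuousOn_id
    have c1 : ContinuousOn (fun t : ℝ => a*t + b₁^2) (Set.Icc 0 M) := by fun_prop
    have m1 : Set.MapsTo (fun t : ℝ => a*t + b₁^2) (Set.Icc 0 M) (Set.Ici 0) :=
      fun t ht => hargt t ht.1
    have c2 : ContinuousOn (fun t : ℝ => gq (a*t + b₁^2)) (Set.Icc 0 M) :=
      gq_contOn.comp c1 m1
    have c3 : ContinuousOn (fun t : ℝ => c * gq (a*t + b₁^2) + b₂^2) (Set.Icc 0 M) :=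
      (c2.const_smul c).add continuousOn_const
    have m3 : Set.MapsTo (fun t : ℝ => c * gq (a*t + b₁^2) + b₂^2) (Set.Icc 0 M)
        (Set.Ici 0) := fun t ht => hargt2 t ht.1
    exact gq_contOn.comp c3 m3
  have hF0 : 0 ≤ F 0 := by
    simp only [hF_def]
    have := gq_nonneg (hargt2 0 le_rfl)
    simpa using this
  have hFM : F M ≤ 0 := by
    simp only [hF_def]
    have s1 : a*M + b₁^2 ≤ a + b₁^2 := by nlinarith [mul_le_mul_of_nonneg_left hM1.le ha.le]
    have s2 : gq (a*M + b₁^2) ≤ gq (a + b₁^2) := gq_mono (hargt M hM0) s1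
    have s3 : c * gq (a*M + b₁^2) + b₂^2 ≤ c * gq (a + b₁^2) + b₂^2 := by
      nlinarith [mul_le_mul_of_nonneg_left s2 hc.le]
    have s4 : gq (c * gq (a*M + b₁^2) + b₂^2) ≤ M := gq_mono (hargt2 M hM0) s3
    linarith
  have hmem : (0:ℝ) ∈ Set.Icc (F M) (F 0) := ⟨hFM, hF0⟩
  obtain ⟨t, htmem, htF⟩ := intermediate_value_Icc' hM0 hcont hmem
  have ht0 : 0 ≤ t := htmem.1
  have ht1 : t < 1 := lt_of_le_of_lt htmem.2 hM1
  set q₂ := gq (a*t + b₁^2) with hq2_def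
  have e1 : q₂/(1-q₂)^2 = a*t + b₁^2 := f_gq (hargt t ht0)
  have ht_eq : t = gq (c*q₂ + b₂^2) := by
    have : F t = 0 := htF
    simp only [hF_def] at this
    linarith
  have e2 : t/(1-t)^2 = c*q₂ + b₂^2 := by
    rw [ht_eq]; exact f_gq (hargt2 t ht0)
  have hq20 : 0 ≤ q₂ := gq_nonneg (hargt t ht0)
  have hq21 : q₂ < 1 := gq_lt_one (hargt t ht0)
  refine ⟨(t, q₂), ⟨⟨ht0, ht1⟩, ⟨hq20, hq21⟩, e1, e2⟩, ?_⟩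
  rintro ⟨y₁, y₂⟩ ⟨⟨hy10, hy11⟩, ⟨hy20, hy21⟩, f1, f2⟩
  simp only at f1 f2 ⊢
  obtain ⟨px1, px2⟩ := sol_pos a c b₁ b₂ ha hc hb t q₂ ht0 ht1 hq20 hq21 e1 e2
  obtain ⟨py1, py2⟩ := sol_pos a c b₁ b₂ ha hc hb y₁ y₂ hy10 hy11 hy20 hy21 f1 f2
  rcases lt_trichotomy y₁ t with h|h|h
  · exact (no_lt a c b₁ b₂ ha hc y₁ y₂ t q₂ py1 py2 hy11 hy21 ht0 ht1 hq20 hq21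
      f1 f2 e1 e2 h).elim
  · have heq : c*y₂ + b₂^2 = c*q₂ + b₂^2 := by rw [← f2, ← e2, h]
    have : y₂ = q₂ := mul_left_cancel₀ hc.ne' (by linarith)
    exact Prod.ext h this
  · exact (no_lt a c b₁ b₂ ha hc t q₂ y₁ y₂ px1 px2 ht1 hq21 hy10 hy11 hy20 hy21
      e1 e2 f1 f2 h).elim
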